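/- arXiv:2001.03548 — 2 statements merged into one kernel-verified Lean document; each statement's English description precedes it below -/
import Mathlib

section
/- There exist constants c, C > 0 such that for every integer k ≥ 2, c k^{n-2} ≤ Σ_{j=2}^{k} [2(1 - cos(2π(j-1)/k))]^{-(n-2)/2} ≤ C k^{n-2} when n ≥ 4. -/
open Finset Real

/-- Partial sums of `∑ 1/(j-1)^2` over `j ∈ [2,k]`, sharp form for induction. -/
lemma aux_sum_inv_sq' (k : ℕ) (hk : 2 ≤ k) :
    ∑ j ∈ Finset.Icc 2 k, (((j : ℝ) - 1) ^ 2)⁻¹ ≤ 2 - ((k : ℝ) - 1)⁻¹ := by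
  induction k, hk using Nat.le_induction with
  | base => norm_num
  | succ k hk ih =>
    rw [Finset.sum_Icc_succ_top (by omega)]
    have hk1 : (1 : ℝ) ≤ (k : ℝ) - 1 := by
      have : (2 : ℝ) ≤ (k : ℝ) := by exact_mod_cast hk
      linarith
    have h0 : (0 : ℝ) < (k : ℝ) - 1 := by linarith
    have h1 : (0 : ℝ) < (k : ℝ) := by linarith
    have key : (((k : ℝ) + 1 - 1) ^ 2)⁻¹ ≤ ((k : ℝ) - 1)⁻¹ - ((k : ℝ) + 1 - 1)⁻¹ := by
      have hsub : ((k : ℝ) - 1)⁻¹ - (k : ℝ)⁻¹ = ((k : ℝ) * ((k : ℝ) - 1))⁻¹ := by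
        field_simp
        ring
      have h3 : (((k : ℝ) + 1 - 1) ^ 2)⁻¹ ≤ ((k : ℝ) * ((k : ℝ) - 1))⁻¹ := by
        apply inv_anti₀ (by positivity)
        nlinarith
      have h4 : ((k : ℝ) + 1 - 1)⁻¹ = (k : ℝ)⁻¹ := by norm_num
      rw [h4]
      linarith
    push_cast
    push_cast at ih key
    linarith

lemma aux_sum_inv_sq (k : ℕ) :
    ∑ j ∈ Finset.Icc 2 k, (((j : ℝ) - 1) ^ 2)⁻¹ ≤ 2 := by
  rcases lt_or_ge k 2 with h | h
  · rw [Finset.Icc_eq_empty (by omega)]; norm_num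
  · have := aux_sum_inv_sq' k h
    have hk1 : (0 : ℝ) < (k : ℝ) - 1 := by
      have : (2 : ℝ) ≤ (k : ℝ) := by exact_mod_cast h
      linarith
    have : (0:ℝ) < ((k:ℝ)-1)⁻¹ := by positivity
    linarith

lemma aux_sum_reflect (k : ℕ) (hk : 2 ≤ k) :
    ∑ j ∈ Finset.Icc 2 k, (((k : ℝ) + 1 - j) ^ 2)⁻¹
      = ∑ j ∈ Finset.Icc 2 k, (((j : ℝ) - 1) ^ 2)⁻¹ := by
  refine Finset.sum_nbij' (fun j => k + 2 - j) (fun j => k + 2 - j) ?_ ?_ ?_ ?_ ?_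
  · intro a ha; simp only [Finset.mem_Icc] at *; omega
  · intro a ha; simp only [Finset.mem_Icc] at *; omega
  · intro a ha; simp only [Finset.mem_Icc] at ha; omega
  · intro a ha; simp only [Finset.mem_Icc] at ha; omega
  · intro a ha
    simp only [Finset.mem_Icc] at ha
    have h2 : ((k + 2 - a : ℕ) : ℝ) = (k : ℝ) + 2 - a := by
      have : a ≤ k + 2 := by omega
      push_cast [Nat.cast_sub this]
      ring
    rw [h2]
    ring_nf

set_option maxHeartbeats 1600000 in
/-- Order of magnitude `k^{n-2}` of the interaction sum
`Σ_{j=2}^k [2(1 - cos(2π(j-1)/k))]^{-(n-2)/2}` for `n ≥ 4`. -/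
theorem interaction_sum_order (n : ℕ) (hn : 4 ≤ n) :
    ∃ c C : ℝ, 0 < c ∧ 0 < C ∧ ∀ k : ℕ, 2 ≤ k →
      c * (k : ℝ) ^ ((n : ℝ) - 2) ≤
        (∑ j ∈ Finset.Icc 2 k,
          (2 * (1 - Real.cos (2 * Real.pi * ((j : ℝ) - 1) / k))) ^ (-(((n : ℝ) - 2) / 2))) ∧
      (∑ j ∈ Finset.Icc 2 k,
          (2 * (1 - Real.cos (2 * Real.pi * ((j : ℝ) - 1) / k))) ^ (-(((n : ℝ) - 2) / 2)))
        ≤ C * (k : ℝ) ^ ((n : ℝ) - 2) := by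
  set m : ℝ := (n : ℝ) - 2 with hm
  have hm2 : (2 : ℝ) ≤ m := by
    have : (4 : ℝ) ≤ (n : ℝ) := by exact_mod_cast hn
    simp [hm]; linarith
  have hmpos : (0 : ℝ) < m := by linarith
  refine ⟨(2 * Real.pi) ^ (-m), 4, by positivity, by norm_num, ?_⟩
  intro k hk
  have hkR : (2 : ℝ) ≤ (k : ℝ) := by exact_mod_cast hk
  have hk0 : (0 : ℝ) < (k : ℝ) := by linarith
  -- pointwise identity: term j = (2 sin (π (j-1)/k))^(-m)
  have hterm : ∀ j ∈ Finset.Icc 2 k,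
      (2 * (1 - Real.cos (2 * Real.pi * ((j : ℝ) - 1) / k))) ^ (-(m / 2))
        = (2 * Real.sin (Real.pi * ((j : ℝ) - 1) / k)) ^ (-m) := by
    intro j hj
    simp only [Finset.mem_Icc] at hj
    set x : ℝ := Real.pi * ((j : ℝ) - 1) / k with hx
    have hj1 : (1 : ℝ) ≤ (j : ℝ) - 1 := by
      have : (2 : ℝ) ≤ (j : ℝ) := by exact_mod_cast hj.1
      linarith
    have hjk : (j : ℝ) - 1 < (k : ℝ) := by
      have : (j : ℝ) ≤ (k : ℝ) := by exact_mod_cast hj.2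
      linarith
    have hx0 : 0 < x := by
      apply div_pos (by positivity) hk0
    have hxpi : x < Real.pi := by
      rw [hx, div_lt_iff₀ hk0]
      nlinarith [Real.pi_pos]
    have hsin : 0 < Real.sin x := Real.sin_pos_of_pos_of_lt_pi hx0 hxpi
    have h2x : 2 * Real.pi * ((j : ℝ) - 1) / k = 2 * x := by rw [hx]; ring
    have hbase : 2 * (1 - Real.cos (2 * x)) = (2 * Real.sin x) ^ 2 := by
      have := Real.cos_two_mul x
      have := Real.sin_sq_add_cos_sq x
      nlinarith
    rw [h2x, hbase]
    have hs : (0 : ℝ) < 2 * Real.sin x := by linarith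
    rw [← Real.rpow_natCast (2 * Real.sin x) 2, ← Real.rpow_mul hs.le]
    congr 1
    push_cast
    ring
  rw [Finset.sum_congr rfl hterm]
  constructor
  · -- lower bound: keep only the j = 2 term
    have h2mem : 2 ∈ Finset.Icc 2 k := by simp [hk]
    have hnonneg : ∀ j ∈ Finset.Icc 2 k,
        0 ≤ (2 * Real.sin (Real.pi * ((j : ℝ) - 1) / k)) ^ (-m) := by
      intro j hj
      apply Real.rpow_nonneg
      have hj' := hj
      simp only [Finset.mem_Icc] at hj'
      have hj1 : (1 : ℝ) ≤ (j : ℝ) - 1 := by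
        have : (2 : ℝ) ≤ (j : ℝ) := by exact_mod_cast hj'.1
        linarith
      have hjk : (j : ℝ) - 1 < (k : ℝ) := by
        have : (j : ℝ) ≤ (k : ℝ) := by exact_mod_cast hj'.2
        linarith
      have hx0 : 0 < Real.pi * ((j : ℝ) - 1) / k := div_pos (by positivity) hk0
      have hxpi : Real.pi * ((j : ℝ) - 1) / k < Real.pi := by
        rw [div_lt_iff₀ hk0]; nlinarith [Real.pi_pos]
      have := Real.sin_pos_of_pos_of_lt_pi hx0 hxpi
      linarith
    have hle := Finset.single_le_sum hnonneg h2mem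
    refine le_trans ?_ hle
    -- term at j = 2 : (2 sin(π/k))^(-m) ≥ (2π/k)^(-m) = (2π)^(-m) k^m
    have hx0 : 0 < Real.pi * ((2 : ℝ) - 1) / k := div_pos (by positivity) hk0
    have hsle : 2 * Real.sin (Real.pi * ((2 : ℝ) - 1) / k) ≤ 2 * Real.pi / k := by
      have h := Real.sin_le hx0.le
      have he : 2 * (Real.pi * ((2 : ℝ) - 1) / k) = 2 * Real.pi / k := by ring
      linarith [he ▸ (by linarith : 2 * Real.sin (Real.pi * ((2 : ℝ) - 1) / k)
        ≤ 2 * (Real.pi * ((2 : ℝ) - 1) / k))]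
    have hxpi : Real.pi * ((2 : ℝ) - 1) / k < Real.pi := by
      rw [div_lt_iff₀ hk0]; nlinarith [Real.pi_pos]
    have hsin : 0 < Real.sin (Real.pi * ((2 : ℝ) - 1) / k) :=
      Real.sin_pos_of_pos_of_lt_pi hx0 hxpi
    have h1 : (2 * Real.pi / k) ^ (-m)
        ≤ (2 * Real.sin (Real.pi * ((2 : ℝ) - 1) / k)) ^ (-m) :=
      Real.rpow_le_rpow_of_nonpos (by linarith) hsle (by linarith)
    refine le_trans (le_of_eq ?_) h1
    rw [Real.div_rpow (by positivity) hk0.le, Real.rpow_neg (by positivity),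
        Real.rpow_neg hk0.le]
    field_simp
  · -- upper bound
    have hbound : ∀ j ∈ Finset.Icc 2 k,
        (2 * Real.sin (Real.pi * ((j : ℝ) - 1) / k)) ^ (-m)
          ≤ (k : ℝ) ^ m * ((((j : ℝ) - 1) ^ 2)⁻¹ + (((k : ℝ) + 1 - j) ^ 2)⁻¹) := by
      intro j hj
      simp only [Finset.mem_Icc] at hj
      set x : ℝ := Real.pi * ((j : ℝ) - 1) / k with hx
      have hj1 : (1 : ℝ) ≤ (j : ℝ) - 1 := by
        have : (2 : ℝ) ≤ (j : ℝ) := by exact_mod_cast hj.1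
        linarith
      have hjk : (1 : ℝ) ≤ (k : ℝ) + 1 - j := by
        have : (j : ℝ) ≤ (k : ℝ) := by exact_mod_cast hj.2
        linarith
      set d : ℝ := min ((j : ℝ) - 1) ((k : ℝ) + 1 - j) with hd
      have hd1 : (1 : ℝ) ≤ d := le_min hj1 hjk
      have hd0 : (0 : ℝ) < d := by linarith
      -- sin x ≥ 2 d / k
      have hsinlb : 2 * d / k ≤ Real.sin x := by
        have hxeq : x = Real.pi * ((j : ℝ) - 1) / k := hx
        rcases le_or_gt x (Real.pi / 2) with hhalf | hhalf
        · have hdx : d ≤ (j : ℝ) - 1 := min_le_left _ _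
          have h1 : 2 / Real.pi * x ≤ Real.sin x :=
            Real.mul_le_sin (by positivity) hhalf
          have he : 2 / Real.pi * x = 2 * ((j : ℝ) - 1) / k := by
            rw [hxeq]
            have hπ := Real.pi_ne_zero
            field_simp
          have : 2 * d / k ≤ 2 * ((j : ℝ) - 1) / k := by
            gcongr <;> linarith
          linarith [he ▸ this]
        · have hdx : d ≤ (k : ℝ) + 1 - j := min_le_right _ _
          have hxpi : x ≤ Real.pi := by
            rw [hxeq, div_le_iff₀ hk0]
            have : (j : ℝ) ≤ (k : ℝ) := by exact_mod_cast hj.2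
            nlinarith [Real.pi_pos]
          have h1 : 2 / Real.pi * (Real.pi - x) ≤ Real.sin (Real.pi - x) :=
            Real.mul_le_sin (by linarith) (by linarith)
          rw [Real.sin_pi_sub] at h1
          have hπx : Real.pi - x = Real.pi * ((k : ℝ) + 1 - j) / k := by
            rw [hxeq]
            field_simp
            ring
          have he : 2 / Real.pi * (Real.pi - x) = 2 * ((k : ℝ) + 1 - j) / k := by
            rw [hπx]
            have hπ := Real.pi_ne_zero
            field_simp
          have : 2 * d / k ≤ 2 * ((k : ℝ) + 1 - j) / k := by
            gcongr <;> linarith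
          linarith [he ▸ this]
      have hs4 : 4 * d / k ≤ 2 * Real.sin x := by
        rw [show (4 : ℝ) * d / k = 2 * (2 * d / k) by ring]
        linarith
      have hpos : (0 : ℝ) < 4 * d / k := by positivity
      have h1 : (2 * Real.sin x) ^ (-m) ≤ (4 * d / k) ^ (-m) :=
        Real.rpow_le_rpow_of_nonpos hpos hs4 (by linarith)
      have h2 : (4 * d / k) ^ (-m) = (k : ℝ) ^ m * ((4 * d) ^ m)⁻¹ := by
        rw [Real.div_rpow (by positivity) hk0.le, Real.rpow_neg (by positivity),
            Real.rpow_neg hk0.le]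
        field_simp
      have h3 : (d ^ 2 : ℝ) ≤ (4 * d) ^ m := by
        have h4d : (1 : ℝ) ≤ 4 * d := by linarith
        have ha : (4 * d) ^ (2 : ℝ) ≤ (4 * d) ^ m :=
          Real.rpow_le_rpow_of_exponent_le h4d hm2
        have hb : (d ^ 2 : ℝ) ≤ (4 * d) ^ (2 : ℝ) := by
          rw [show ((4 : ℝ) * d) ^ (2 : ℝ) = (4 * d) ^ (2 : ℕ) by
            rw [← Real.rpow_natCast (4 * d) 2]; norm_num]
          nlinarith
        linarith
      have h4 : ((4 * d) ^ m : ℝ)⁻¹ ≤ (d ^ 2)⁻¹ := by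
        apply inv_anti₀ (by positivity) h3
      have h5 : ((d : ℝ) ^ 2)⁻¹ ≤ (((j : ℝ) - 1) ^ 2)⁻¹ + (((k : ℝ) + 1 - j) ^ 2)⁻¹ := by
        rcases min_cases ((j : ℝ) - 1) ((k : ℝ) + 1 - j) with ⟨he, _⟩ | ⟨he, _⟩ <;>
          rw [hd, he]
        · have : (0 : ℝ) < (((k : ℝ) + 1 - j) ^ 2)⁻¹ := by positivity
          linarith
        · have : (0 : ℝ) < (((j : ℝ) - 1) ^ 2)⁻¹ := by positivity
          linarith
      calc (2 * Real.sin x) ^ (-m) ≤ (4 * d / k) ^ (-m) := h1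
        _ = (k : ℝ) ^ m * ((4 * d) ^ m)⁻¹ := h2
        _ ≤ (k : ℝ) ^ m * (d ^ 2)⁻¹ := by
            apply mul_le_mul_of_nonneg_left h4 (by positivity)
        _ ≤ (k : ℝ) ^ m * ((((j : ℝ) - 1) ^ 2)⁻¹ + (((k : ℝ) + 1 - j) ^ 2)⁻¹) := by
            apply mul_le_mul_of_nonneg_left h5 (by positivity)
    calc ∑ j ∈ Finset.Icc 2 k, (2 * Real.sin (Real.pi * ((j : ℝ) - 1) / k)) ^ (-m)
        ≤ ∑ j ∈ Finset.Icc 2 k,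
            (k : ℝ) ^ m * ((((j : ℝ) - 1) ^ 2)⁻¹ + (((k : ℝ) + 1 - j) ^ 2)⁻¹) :=
          Finset.sum_le_sum hbound
      _ = (k : ℝ) ^ m * (∑ j ∈ Finset.Icc 2 k, (((j : ℝ) - 1) ^ 2)⁻¹
            + ∑ j ∈ Finset.Icc 2 k, (((k : ℝ) + 1 - j) ^ 2)⁻¹) := by
          rw [← Finset.mul_sum, Finset.sum_add_distrib]
      _ ≤ (k : ℝ) ^ m * (2 + 2) := by
          apply mul_le_mul_of_nonneg_left _ (by positivity)
          have h1 := aux_sum_inv_sq k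
          have h2 := aux_sum_reflect k hk
          linarith [h2 ▸ (aux_sum_inv_sq k)]
      _ = 4 * (k : ℝ) ^ m := by ring
end

section
/- Let n ≥ 5. There exist constants c, C > 0 (depending only on n) such that for all τ ∈ (0, 1/2) and all integers k with kτ ≥ 1, c·k/τ^{n-3} ≤ Σ_{j=1}^{k} [4τ² + 2(1-τ²)(1 - cos(2π(j-1)/k))]^{-(n-2)/2} ≤ C·k/τ^{n-3}. -/
set_option maxHeartbeats 4000000

open Finset Real

lemma step_ineq (s : ℕ) (hs : 2 ≤ s) (a : ℝ) (ha : 1 ≤ a) :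
    ((a+1)^s)⁻¹ ≤ (a^(s-1))⁻¹ - ((a+1)^(s-1))⁻¹ := by
  have ha0 : (0:ℝ) < a := lt_of_lt_of_le one_pos ha
  have hb0 : (0:ℝ) < a + 1 := by linarith
  have hsr : (2:ℝ) ≤ (s:ℝ) := by exact_mod_cast hs
  have key : (a+2) * a^(s-1) ≤ (a+1)^s := by
    have hber : 1 + (s:ℝ) * (1/a) ≤ (1 + 1/a)^s := by
      have h2 : (-2:ℝ) ≤ 1/a := by
        have : (0:ℝ) ≤ 1/a := by positivity
        linarith
      exact one_add_mul_le_pow h2 s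
    have hrw : (a+1)^s = a^s * (1+1/a)^s := by
      rw [← mul_pow]; congr 1; field_simp
    have h1 : a^s * (1 + (s:ℝ)*(1/a)) ≤ (a+1)^s := by
      rw [hrw]; exact mul_le_mul_of_nonneg_left hber (by positivity)
    have hss : a^s = a * a^(s-1) := by
      conv_lhs => rw [show s = (s-1)+1 by omega]
      rw [pow_succ]; ring
    have heq : a^s * (1 + (s:ℝ)*(1/a)) = a*a^(s-1) + (s:ℝ)*a^(s-1) := by
      rw [hss]; field_simp
    rw [heq] at h1
    nlinarith [pow_pos ha0 (s-1)]
  have e1 : ((a+1)^s)⁻¹ + ((a+1)^(s-1))⁻¹ = (a+2)/(a+1)^s := by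
    rw [show s = (s-1)+1 by omega]
    rw [pow_succ]
    rw [show (s-1)+1-1 = s-1 by omega]
    field_simp
    ring
  rw [le_sub_iff_add_le, e1, inv_eq_one_div, div_le_div_iff₀ (by positivity) (by positivity)]
  nlinarith [key]

lemma tail_sum' (s : ℕ) (hs : 2 ≤ s) (M : ℕ) (hM : 2 ≤ M) (N : ℕ) :
    ∑ m ∈ Finset.Icc M N, ((m:ℝ)^s)⁻¹ ≤
      (((M:ℝ)-1)^(s-1))⁻¹ - (((max (M-1) N : ℕ):ℝ)^(s-1))⁻¹ := by
  have hc : ((M-1:ℕ):ℝ) = (M:ℝ)-1 := by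
    push_cast [show 1 ≤ M by omega]; ring
  induction N with
  | zero =>
      rw [Finset.Icc_eq_empty (by omega), Finset.sum_empty]
      rw [show max (M-1) 0 = M-1 by omega, hc, sub_self]
  | succ N ih =>
      by_cases h : M ≤ N + 1
      · have hmax : max (M-1) (N+1) = N+1 := by omega
        have hmax2 : max (M-1) N = N := by omega
        rw [hmax2] at ih
        rw [Finset.sum_Icc_succ_top h, hmax]
        have hN1 : (1:ℝ) ≤ (N:ℝ) := by exact_mod_cast (show 1 ≤ N by omega)
        have hstep := step_ineq s hs (N:ℝ) hN1
        have hcast : ((N:ℝ)+1) = ((N+1:ℕ):ℝ) := by push_cast; ring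
        rw [hcast] at hstep
        linarith
      · rw [Finset.Icc_eq_empty (by omega), Finset.sum_empty]
        rw [show max (M-1) (N+1) = M-1 by omega, hc, sub_self]

lemma tail_sum (s : ℕ) (hs : 2 ≤ s) (M : ℕ) (hM : 2 ≤ M) (N : ℕ) :
    ∑ m ∈ Finset.Icc M N, ((m:ℝ)^s)⁻¹ ≤ (((M:ℝ)-1)^(s-1))⁻¹ := by
  have h := tail_sum' s hs M hM N
  have : (0:ℝ) ≤ (((max (M-1) N : ℕ):ℝ)^(s-1))⁻¹ := by positivity
  linarith

lemma sum_Icc_shift (f : ℕ → ℝ) (k : ℕ) :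
    ∑ j ∈ Finset.Icc 1 k, f (j-1) = ∑ m ∈ Finset.range k, f m := by
  induction k with
  | zero => simp
  | succ k ih =>
      rw [Finset.sum_Icc_succ_top (by omega), ih, Finset.sum_range_succ]
      simp

/-- Order of magnitude `k/τ^{n-3}` of the cross-interaction sum for `n ≥ 5`. -/
theorem cross_interaction_sum_order (n : ℕ) (hn : 5 ≤ n) :
    ∃ c C : ℝ, 0 < c ∧ 0 < C ∧
      ∀ τ : ℝ, τ ∈ Set.Ioo (0 : ℝ) (1 / 2) → ∀ k : ℕ, 1 ≤ (k : ℝ) * τ →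
        c * (k : ℝ) / τ ^ ((n : ℝ) - 3) ≤
          (∑ j ∈ Finset.Icc 1 k,
            (4 * τ ^ 2 + 2 * (1 - τ ^ 2) * (1 - Real.cos (2 * Real.pi * ((j : ℝ) - 1) / k)))
              ^ (-(((n : ℝ) - 2) / 2))) ∧
        (∑ j ∈ Finset.Icc 1 k,
            (4 * τ ^ 2 + 2 * (1 - τ ^ 2) * (1 - Real.cos (2 * Real.pi * ((j : ℝ) - 1) / k)))
              ^ (-(((n : ℝ) - 2) / 2)))
          ≤ C * (k : ℝ) / τ ^ ((n : ℝ) - 3) := by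
  classical
  set e : ℝ := -(((n : ℝ) - 2) / 2) with he
  have hn5 : (5:ℝ) ≤ (n:ℝ) := by exact_mod_cast hn
  have he_neg : e ≤ 0 := by rw [he]; nlinarith
  clear_value e
  have hπ := Real.pi_pos
  refine ⟨((4:ℝ) + 4*Real.pi^2) ^ e, 2*(2 + 2^(n-3)), by positivity, by positivity, ?_⟩
  intro τ hτ k hk
  obtain ⟨hτ0, hτh⟩ := hτ
  have hτh' : τ < 1/2 := hτh
  have hkR : (0:ℝ) < (k:ℝ) := by nlinarith
  have hk0 : 0 < k := by exact_mod_cast hkR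
  -- helper equalities
  have hτpow3 : τ ^ ((n:ℝ) - 3) = τ ^ (n-3:ℕ) := by
    rw [show ((n:ℝ) - 3) = ((n-3:ℕ):ℝ) by rw [Nat.cast_sub (by omega)]; norm_num,
      Real.rpow_natCast]
  have hg2 : ∀ x : ℝ, 0 < x → (x^2 : ℝ) ^ e = (x ^ (n-2:ℕ))⁻¹ := by
    intro x hx
    rw [← Real.rpow_natCast x 2, ← Real.rpow_mul hx.le]
    rw [show ((2:ℕ):ℝ) * e = -((n-2:ℕ):ℝ) by
      rw [Nat.cast_sub (by omega)]; push_cast; rw [he]; ring]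
    rw [Real.rpow_neg hx.le, Real.rpow_natCast]
  have hkey : (k:ℝ) * τ * (τ ^ (n-2:ℕ))⁻¹ = (k:ℝ) / τ ^ (n-3:ℕ) := by
    rw [show n-2 = (n-3)+1 by omega, pow_succ]
    field_simp
  have hbase_pos : ∀ x : ℝ, 0 < 4*τ^2 + 2*(1-τ^2)*(1 - Real.cos x) := by
    intro x
    have h1 := Real.cos_le_one x
    have h2 : 0 ≤ 2*(1-τ^2)*(1-Real.cos x) := by
      apply mul_nonneg (by nlinarith) (by linarith)
    have h3 : (0:ℝ) < τ^2 := by positivity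
    linarith
  -- floor facts
  set F : ℕ := Nat.floor ((k:ℝ)*τ) with hF
  have hF1 : 1 ≤ F := Nat.le_floor (by exact_mod_cast hk)
  have hFle : (F:ℝ) ≤ (k:ℝ)*τ := Nat.floor_le (by positivity)
  have hFgt : (k:ℝ)*τ < (F:ℝ) + 1 := Nat.lt_floor_add_one _
  constructor
  · -- LOWER BOUND
    set M : ℕ := F + 1 with hM
    have hMk : M ≤ k := by
      have : F < k := by
        have := (Nat.floor_lt (by positivity)).2 (show (k:ℝ)*τ < (k:ℝ) by nlinarith)
        exact this
      omega
    have hterm : ∀ j ∈ Finset.Icc 1 M,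
        ((4:ℝ) + 4*Real.pi^2) ^ e * (τ ^ (n-2:ℕ))⁻¹ ≤
          (4 * τ ^ 2 + 2 * (1 - τ ^ 2) * (1 - Real.cos (2 * Real.pi * ((j : ℝ) - 1) / k))) ^ e := by
      intro j hj
      rw [Finset.mem_Icc] at hj
      have hj1R : (1:ℝ) ≤ (j:ℝ) := by exact_mod_cast hj.1
      have hjM : (j:ℝ) ≤ (M:ℝ) := by exact_mod_cast hj.2
      have hrle : (j:ℝ) - 1 ≤ (k:ℝ)*τ := by
        have : (M:ℝ) = (F:ℝ) + 1 := by push_cast [hM]; ring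
        nlinarith
      set θ : ℝ := 2 * Real.pi * ((j:ℝ) - 1) / k with hθ
      have hθ0 : 0 ≤ θ := by
        apply div_nonneg _ hkR.le
        nlinarith
      have hθle : θ ≤ 2*Real.pi*τ := by
        rw [hθ, div_le_iff₀ hkR]
        nlinarith
      have hcos : 1 - Real.cos θ ≤ θ^2/2 := by
        have := Real.one_sub_sq_div_two_le_cos (x := θ)
        linarith
      have hbase_le : 4*τ^2 + 2*(1-τ^2)*(1 - Real.cos θ) ≤ ((4:ℝ) + 4*Real.pi^2) * τ^2 := by
        have h1 : 1 - Real.cos θ ≤ 2*Real.pi^2*τ^2 := by nlinarith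
        have h2 : 0 ≤ 1 - Real.cos θ := by
          have := Real.cos_le_one θ; linarith
        nlinarith [sq_nonneg τ]
      have := Real.rpow_le_rpow_of_nonpos (hbase_pos θ) hbase_le he_neg
      calc ((4:ℝ) + 4*Real.pi^2) ^ e * (τ ^ (n-2:ℕ))⁻¹
          = (((4:ℝ) + 4*Real.pi^2) * τ^2) ^ e := by
            rw [Real.mul_rpow (by positivity) (by positivity), hg2 τ hτ0]
        _ ≤ _ := this
    have hsum1 : (M:ℝ) * (((4:ℝ) + 4*Real.pi^2) ^ e * (τ ^ (n-2:ℕ))⁻¹) ≤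
        ∑ j ∈ Finset.Icc 1 M,
          (4 * τ ^ 2 + 2 * (1 - τ ^ 2) * (1 - Real.cos (2 * Real.pi * ((j : ℝ) - 1) / k))) ^ e := by
      have := Finset.card_nsmul_le_sum (Finset.Icc 1 M) _ _ hterm
      rwa [Nat.card_Icc, nsmul_eq_mul, show M + 1 - 1 = M by omega] at this
    have hsum2 : ∑ j ∈ Finset.Icc 1 M,
          (4 * τ ^ 2 + 2 * (1 - τ ^ 2) * (1 - Real.cos (2 * Real.pi * ((j : ℝ) - 1) / k))) ^ e ≤
        ∑ j ∈ Finset.Icc 1 k,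
          (4 * τ ^ 2 + 2 * (1 - τ ^ 2) * (1 - Real.cos (2 * Real.pi * ((j : ℝ) - 1) / k))) ^ e := by
      apply Finset.sum_le_sum_of_subset_of_nonneg (Finset.Icc_subset_Icc_right hMk)
      intro j _ _
      exact Real.rpow_nonneg (hbase_pos _).le _
    have hfin : ((4:ℝ) + 4*Real.pi^2) ^ e * (k:ℝ) / τ ^ ((n:ℝ) - 3) ≤
        (M:ℝ) * (((4:ℝ) + 4*Real.pi^2) ^ e * (τ ^ (n-2:ℕ))⁻¹) := by
      have hMge : (k:ℝ)*τ ≤ (M:ℝ) := by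
        have : (M:ℝ) = (F:ℝ) + 1 := by push_cast [hM]; ring
        linarith
      have hc : (0:ℝ) < ((4:ℝ) + 4*Real.pi^2) ^ e := by positivity
      rw [hτpow3]
      calc ((4:ℝ) + 4*Real.pi^2) ^ e * (k:ℝ) / τ ^ (n-3:ℕ)
          = ((k:ℝ)*τ) * (((4:ℝ) + 4*Real.pi^2) ^ e * (τ ^ (n-2:ℕ))⁻¹) := by
            rw [show ((k:ℝ)*τ) * (((4:ℝ) + 4*Real.pi^2) ^ e * (τ ^ (n-2:ℕ))⁻¹)
              = ((4:ℝ) + 4*Real.pi^2) ^ e * ((k:ℝ)*τ*(τ ^ (n-2:ℕ))⁻¹) by ring, hkey]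
            ring
        _ ≤ (M:ℝ) * (((4:ℝ) + 4*Real.pi^2) ^ e * (τ ^ (n-2:ℕ))⁻¹) := by
            apply mul_le_mul_of_nonneg_right hMge
            positivity
    linarith
  · -- UPPER BOUND
    set s : ℕ := n - 2 with hs
    set t : ℕ := n - 3 with ht
    have hst : s = t + 1 := by omega
    have hs2 : 2 ≤ s := by omega
    clear_value s t
    set g : ℕ → ℝ := fun m => (τ^2 + ((m:ℝ)/k)^2) ^ e with hg
    clear_value g
    have hgbase : ∀ m : ℕ, (0:ℝ) < τ^2 + ((m:ℝ)/k)^2 := by intro m; positivity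
    have hg_nonneg : ∀ m : ℕ, 0 ≤ g m := by
      intro m
      simp only [hg]
      exact Real.rpow_nonneg (hgbase m).le _
    have hterm : ∀ j ∈ Finset.Icc 1 k,
        (4 * τ ^ 2 + 2 * (1 - τ ^ 2) * (1 - Real.cos (2 * Real.pi * ((j : ℝ) - 1) / k))) ^ e
          ≤ g (j-1) + g (k+1-j) := by
      intro j hj
      rw [Finset.mem_Icc] at hj
      have hj1 := hj.1
      have hjk := hj.2
      set r : ℝ := (j:ℝ) - 1 with hr
      have hj1R : (1:ℝ) ≤ (j:ℝ) := by exact_mod_cast hj1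
      have hjkR : (j:ℝ) ≤ (k:ℝ) := by exact_mod_cast hjk
      have hr0 : 0 ≤ r := by rw [hr]; linarith
      have hrk : r ≤ (k:ℝ) - 1 := by rw [hr]; linarith
      have hkr0 : (0:ℝ) < (k:ℝ) - r := by linarith
      have hsinsq := Real.sin_sq_eq_half_sub (x := Real.pi * r / k)
      have h2x : 2 * (Real.pi * r / k) = 2 * Real.pi * r / k := by ring
      rw [h2x] at hsinsq
      set m : ℝ := min r ((k:ℝ) - r) with hm
      have hm0 : 0 ≤ m := le_min hr0 (by linarith)
      have hsin : 2*m/(k:ℝ) ≤ Real.sin (Real.pi * r / k) := by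
        rcases le_total r ((k:ℝ) - r) with hc | hc
        · have hmeq : m = r := min_eq_left hc
          have h1 : 0 ≤ Real.pi * r / k := by positivity
          have h2 : Real.pi * r / k ≤ Real.pi / 2 := by
            rw [div_le_div_iff₀ hkR two_pos]
            nlinarith
          have h3 := Real.mul_le_sin h1 h2
          calc 2*m/(k:ℝ) = 2/Real.pi * (Real.pi * r / k) := by
                rw [hmeq]; field_simp
            _ ≤ _ := h3
        · have hmeq : m = (k:ℝ) - r := min_eq_right hc
          have hrw : Real.sin (Real.pi * r / k) = Real.sin (Real.pi * ((k:ℝ)-r) / k) := by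
            rw [show Real.pi * ((k:ℝ)-r) / k = Real.pi - Real.pi * r / k by
              field_simp]
            rw [Real.sin_pi_sub]
          have h1 : 0 ≤ Real.pi * ((k:ℝ)-r) / k := by positivity
          have h2 : Real.pi * ((k:ℝ)-r) / k ≤ Real.pi / 2 := by
            rw [div_le_div_iff₀ hkR two_pos]
            nlinarith
          have h3 := Real.mul_le_sin h1 h2
          rw [hrw, hmeq]
          calc 2*((k:ℝ)-r)/(k:ℝ) = 2/Real.pi * (Real.pi * ((k:ℝ)-r) / k) := by
                field_simp
            _ ≤ _ := h3
      have hsin2 : (2*m/(k:ℝ))^2 ≤ Real.sin (Real.pi * r / k)^2 :=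
        pow_le_pow_left₀ (by positivity) hsin 2
      have h1c : 8*(m/(k:ℝ))^2 ≤ 1 - Real.cos (2 * Real.pi * r / k) := by
        have he1 : (2*m/(k:ℝ))^2 = 4*(m/(k:ℝ))^2 := by ring
        nlinarith [hsin2, hsinsq]
      have hτsq : τ^2 < 1/4 := by nlinarith
      have hbase_ge : τ^2 + (m/(k:ℝ))^2 ≤
          4 * τ ^ 2 + 2 * (1 - τ ^ 2) * (1 - Real.cos (2 * Real.pi * r / k)) := by
        have hp : 2*(1-τ^2) * (8*(m/(k:ℝ))^2) ≤
            2*(1-τ^2) * (1 - Real.cos (2 * Real.pi * r / k)) :=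
          mul_le_mul_of_nonneg_left h1c (by nlinarith)
        nlinarith [sq_nonneg (m/(k:ℝ)), sq_nonneg τ]
      have hle1 : (4 * τ ^ 2 + 2 * (1 - τ ^ 2) * (1 - Real.cos (2 * Real.pi * r / k))) ^ e
          ≤ (τ^2 + (m/(k:ℝ))^2) ^ e :=
        Real.rpow_le_rpow_of_nonpos (by positivity) hbase_ge he_neg
      have hcj : g (j-1) = (τ^2 + (r/(k:ℝ))^2) ^ e := by
        simp only [hg]
        rw [show ((j-1:ℕ):ℝ) = r by rw [hr, Nat.cast_sub hj1]; norm_num]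
      have hck : g (k+1-j) = (τ^2 + (((k:ℝ)-r)/(k:ℝ))^2) ^ e := by
        simp only [hg]
        rw [show ((k+1-j:ℕ):ℝ) = (k:ℝ) - r by
          rw [Nat.cast_sub (by omega)]; push_cast; rw [hr]; ring]
      have hle2 : (τ^2 + (m/(k:ℝ))^2) ^ e ≤ g (j-1) + g (k+1-j) := by
        rcases min_cases r ((k:ℝ) - r) with ⟨hmeq, _⟩ | ⟨hmeq, _⟩
        · rw [hm, hmeq, ← hcj]
          exact le_add_of_nonneg_right (hg_nonneg _)
        · rw [hm, hmeq, ← hck]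
          exact le_add_of_nonneg_left (hg_nonneg _)
      exact le_trans hle1 hle2
    have hS : (∑ j ∈ Finset.Icc 1 k,
          (4 * τ ^ 2 + 2 * (1 - τ ^ 2) * (1 - Real.cos (2 * Real.pi * ((j : ℝ) - 1) / k))) ^ e)
        ≤ (∑ j ∈ Finset.Icc 1 k, g (j-1)) + ∑ j ∈ Finset.Icc 1 k, g (k+1-j) := by
      rw [← Finset.sum_add_distrib]
      exact Finset.sum_le_sum hterm
    have hA : ∑ j ∈ Finset.Icc 1 k, g (j-1) = ∑ m ∈ Finset.range k, g m := sum_Icc_shift g k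
    have hB : ∑ j ∈ Finset.Icc 1 k, g (k+1-j) = ∑ i ∈ Finset.range k, g (k-i) := by
      have hcongr : ∀ j ∈ Finset.Icc 1 k, g (k+1-j) = (fun i => g (k-i)) (j-1) := by
        intro j hj
        rw [Finset.mem_Icc] at hj
        show g (k+1-j) = g (k - (j-1))
        congr 1
        omega
      rw [Finset.sum_congr rfl hcongr, sum_Icc_shift (fun i => g (k-i)) k]
    have hB2 : ∑ i ∈ Finset.range k, g (k-i) = ∑ i ∈ Finset.range k, g (i+1) := by
      rw [← Finset.sum_range_reflect (fun i => g (i+1)) k]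
      apply Finset.sum_congr rfl
      intro i hi
      rw [Finset.mem_range] at hi
      show g (k-i) = g ((k-1-i)+1)
      congr 1
      omega
    have hA' : ∑ m ∈ Finset.range k, g m ≤ ∑ m ∈ Finset.range (k+1), g m := by
      rw [Finset.sum_range_succ]
      linarith [hg_nonneg k]
    have hB' : ∑ i ∈ Finset.range k, g (i+1) ≤ ∑ m ∈ Finset.range (k+1), g m := by
      rw [Finset.sum_range_succ']
      linarith [hg_nonneg 0]
    set P : ℕ → Prop := fun m => (m:ℝ) ≤ (k:ℝ)*τ with hP
    set G1 : ℝ := ∑ m ∈ (Finset.range (k+1)).filter (fun m => P m), g m with hG1d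
    set G2 : ℝ := ∑ m ∈ (Finset.range (k+1)).filter (fun m => ¬ P m), g m with hG2d
    clear_value G1 G2
    have hsplit : ∑ m ∈ Finset.range (k+1), g m = G1 + G2 := by
      rw [hG1d, hG2d]
      exact (Finset.sum_filter_add_sum_filter_not _ _ _).symm
    have hG1 : G1 ≤ 2*((k:ℝ)*τ) * (τ^s)⁻¹ := by
      rw [hG1d]
      have hb : ∀ m ∈ (Finset.range (k+1)).filter (fun m => P m), g m ≤ (τ^s)⁻¹ := by
        intro m _
        rw [← hg2 τ hτ0]
        simp only [hg]
        exact Real.rpow_le_rpow_of_nonpos (by positivity)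
          (by nlinarith [sq_nonneg ((m:ℝ)/(k:ℝ))]) he_neg
      have hcard : ((Finset.range (k+1)).filter (fun m => P m)).card ≤ F + 1 := by
        have hsub : (Finset.range (k+1)).filter (fun m => P m) ⊆ Finset.range (F+1) := by
          intro m hm
          rw [Finset.mem_filter] at hm
          rw [Finset.mem_range]
          have hmF : m ≤ F := Nat.le_floor hm.2
          omega
        calc ((Finset.range (k+1)).filter (fun m => P m)).card
            ≤ (Finset.range (F+1)).card := Finset.card_le_card hsub
          _ = F + 1 := Finset.card_range _
      calc (∑ m ∈ (Finset.range (k+1)).filter (fun m => P m), g m)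
            ≤ ((Finset.range (k+1)).filter (fun m => P m)).card • (τ^s)⁻¹ :=
            Finset.sum_le_card_nsmul _ _ _ hb
        _ = (((Finset.range (k+1)).filter (fun m => P m)).card : ℝ) * (τ^s)⁻¹ :=
            nsmul_eq_mul _ _
        _ ≤ 2*((k:ℝ)*τ) * (τ^s)⁻¹ := by
            apply mul_le_mul_of_nonneg_right _ (by positivity)
            have h1 : (((Finset.range (k+1)).filter (fun m => P m)).card : ℝ) ≤ (F:ℝ) + 1 := by
              exact_mod_cast hcard
            linarith
    have hG2 : G2 ≤ 2^t * ((k:ℝ) / τ^t) := by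
      rw [hG2d]
      have hsub2 : (Finset.range (k+1)).filter (fun m => ¬ P m) ⊆ Finset.Icc (F+1) k := by
        intro m hm
        rw [Finset.mem_filter, Finset.mem_range] at hm
        rw [Finset.mem_Icc]
        have h2 : (k:ℝ)*τ < (m:ℝ) := not_le.1 hm.2
        have h3 : F < m := by
          by_contra hcon
          push_neg at hcon
          have : (m:ℝ) ≤ (F:ℝ) := by exact_mod_cast hcon
          linarith
        omega
      have hgb : ∀ m ∈ (Finset.range (k+1)).filter (fun m => ¬ P m),
          g m ≤ (k:ℝ)^s * (((m:ℝ))^s)⁻¹ := by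
        intro m hm
        rw [Finset.mem_filter] at hm
        have hm1 : (1:ℝ) ≤ (m:ℝ) := le_trans hk (le_of_lt (not_le.1 hm.2))
        have hmpos : (0:ℝ) < (m:ℝ) := by linarith
        have hdiv : (0:ℝ) < (m:ℝ)/(k:ℝ) := div_pos hmpos hkR
        have h1 : g m ≤ (((m:ℝ)/(k:ℝ))^2) ^ e := by
          simp only [hg]
          exact Real.rpow_le_rpow_of_nonpos (pow_pos hdiv 2) (by nlinarith [sq_nonneg τ]) he_neg
        calc g m ≤ (((m:ℝ)/(k:ℝ))^2) ^ e := h1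
          _ = (((m:ℝ)/(k:ℝ)) ^ s)⁻¹ := hg2 _ hdiv
          _ = (k:ℝ)^s * (((m:ℝ))^s)⁻¹ := by
              rw [div_pow, inv_div, div_eq_mul_inv]
      calc (∑ m ∈ (Finset.range (k+1)).filter (fun m => ¬ P m), g m)
            ≤ ∑ m ∈ (Finset.range (k+1)).filter (fun m => ¬ P m),
              (k:ℝ)^s * (((m:ℝ))^s)⁻¹ := Finset.sum_le_sum hgb
        _ ≤ ∑ m ∈ Finset.Icc (F+1) k, (k:ℝ)^s * (((m:ℝ))^s)⁻¹ := by
            apply Finset.sum_le_sum_of_subset_of_nonneg hsub2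
            intro m _ _
            positivity
        _ = (k:ℝ)^s * ∑ m ∈ Finset.Icc (F+1) k, (((m:ℝ))^s)⁻¹ := by
            rw [Finset.mul_sum]
        _ ≤ (k:ℝ)^s * ((((F+1:ℕ):ℝ)-1)^(s-1))⁻¹ := by
            exact mul_le_mul_of_nonneg_left (tail_sum s hs2 (F+1) (by omega) k) (by positivity)
        _ ≤ (k:ℝ)^s * (((k:ℝ)*τ/2)^(s-1))⁻¹ := by
            apply mul_le_mul_of_nonneg_left _ (by positivity)
            have hM1 : ((F+1:ℕ):ℝ) - 1 = (F:ℝ) := by push_cast; ring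
            have hF1R : (1:ℝ) ≤ (F:ℝ) := by exact_mod_cast hF1
            have hFge : (k:ℝ)*τ/2 ≤ (F:ℝ) := by linarith
            rw [hM1]
            have hple := pow_le_pow_left₀ (show (0:ℝ) ≤ (k:ℝ)*τ/2 by positivity) hFge (s-1)
            exact inv_anti₀ (by positivity) hple
        _ = 2^t * ((k:ℝ) / τ^t) := by
            rw [show s - 1 = t by omega, hst, pow_succ]
            field_simp
            rw [← mul_pow (_ / 2), div_mul_cancel₀ _ two_ne_zero, mul_pow]
    rw [hτpow3]
    have hDpos : (0:ℝ) ≤ (k:ℝ) / τ^t := by positivity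
    have hfinal : G1 + G2 ≤ (2 + 2^t) * ((k:ℝ) / τ^t) := by
      have e1 : 2*((k:ℝ)*τ) * (τ^s)⁻¹ = 2 * ((k:ℝ) / τ^t) := by
        rw [show 2*((k:ℝ)*τ) * (τ^s)⁻¹ = 2 * ((k:ℝ)*τ*(τ^s)⁻¹) by ring, hkey]
      rw [e1] at hG1
      linarith
    calc (∑ j ∈ Finset.Icc 1 k,
          (4 * τ ^ 2 + 2 * (1 - τ ^ 2) * (1 - Real.cos (2 * Real.pi * ((j : ℝ) - 1) / k))) ^ e)
        ≤ (∑ j ∈ Finset.Icc 1 k, g (j-1)) + ∑ j ∈ Finset.Icc 1 k, g (k+1-j) := hS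
      _ ≤ (∑ m ∈ Finset.range (k+1), g m) + ∑ m ∈ Finset.range (k+1), g m := by
          rw [hA, hB, hB2]
          exact add_le_add hA' hB'
      _ = 2 * (G1 + G2) := by rw [hsplit]; ring
      _ ≤ 2 * ((2 + 2^t) * ((k:ℝ) / τ^t)) := by linarith [hfinal]
      _ = 2 * (2 + 2^t) * (k:ℝ) / τ^t := by ring
end
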